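/- arXiv:2605.04319 — 5 statements merged into one kernel-verified Lean document; each statement's English description precedes it below -/
import Mathlib

section
/- Let K be an integral domain of characteristic zero, and let φ and f be formal power series over K such that the constant coefficient of φ is nonzero, the constant coefficient of f is zero, and the x^1-coefficient of f is nonzero. Let f̄ be the compositional inverse of f (i.e., f̄ has zero constant term and f(f̄(x)) = f̄(f(x)) = x), and assume f̄(x) = x·φ(f̄(x)). Then for every formal power series g over K and every positive integer n, n·[x^n] g(f̄(x)) = [x^{n-1}] (g'(x)·φ(x)^n). -/
open PowerSeries Finset

set_option linter.unusedVariables false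



/-- Composition `g(h(x))` of formal power series, defined coefficientwise by
`[x^n] g(h(x)) = Σ_{i=0}^{n} g_i · [x^n] h(x)^i` (valid when `h` has zero constant term). -/
noncomputable def psComp {K : Type*} [CommRing K] (g h : PowerSeries K) : PowerSeries K :=
  PowerSeries.mk fun n =>
    ∑ i ∈ Finset.range (n + 1), (PowerSeries.coeff i g) * (PowerSeries.coeff n (h ^ i))


section Aux

variable {K : Type*} [CommRing K]

lemma coeff_psComp (g h : PowerSeries K) (n : ℕ) :
    PowerSeries.coeff n (psComp g h) =
      ∑ i ∈ Finset.range (n + 1), (PowerSeries.coeff i g) * (PowerSeries.coeff n (h ^ i)) := by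
  simp [psComp]

lemma coeff_pow_zero_of_lt {h : PowerSeries K} (hh : PowerSeries.constantCoeff h = 0)
    {n i : ℕ} (hni : n < i) : PowerSeries.coeff n (h ^ i) = 0 := by
  obtain ⟨c, rfl⟩ := PowerSeries.X_dvd_iff.mpr hh
  rw [mul_pow, PowerSeries.coeff_X_pow_mul']
  simp [Nat.not_le.mpr hni]

lemma coeff_aeval {h : PowerSeries K} (hh : PowerSeries.constantCoeff h = 0)
    (p : Polynomial K) (n : ℕ) :
    PowerSeries.coeff n (Polynomial.aeval h p) =
      ∑ i ∈ Finset.range (n + 1), p.coeff i * PowerSeries.coeff n (h ^ i) := by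
  have hd : p.natDegree < p.natDegree + n + 1 := by omega
  rw [Polynomial.aeval_eq_sum_range' hd, map_sum]
  have hsub : Finset.range (n + 1) ⊆ Finset.range (p.natDegree + n + 1) := by
    apply Finset.range_subset_range.mpr; omega
  rw [Finset.sum_subset hsub]
  · apply Finset.sum_congr rfl
    intro i _
    simp [smul_eq_mul]
  · intro i _ hi
    have : n < i := by simp at hi ⊢; omega
    simp [coeff_pow_zero_of_lt hh this]

lemma psComp_coe {h : PowerSeries K} (hh : PowerSeries.constantCoeff h = 0)
    (p : Polynomial K) : psComp (p : PowerSeries K) h = Polynomial.aeval h p := by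
  ext n
  rw [coeff_psComp, coeff_aeval hh]
  exact Finset.sum_congr rfl fun i _ => by rw [Polynomial.coeff_coe]

lemma coeff_psComp_aeval {h : PowerSeries K} (hh : PowerSeries.constantCoeff h = 0)
    (g : PowerSeries K) {n N : ℕ} (hnN : n < N) :
    PowerSeries.coeff n (psComp g h) =
      PowerSeries.coeff n (Polynomial.aeval h (PowerSeries.trunc N g)) := by
  rw [coeff_psComp, coeff_aeval hh]
  refine Finset.sum_congr rfl fun i hi => ?_
  rw [PowerSeries.coeff_trunc]
  have : i < N := by simp at hi; omega
  rw [if_pos this]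

lemma psComp_add (a b h : PowerSeries K) :
    psComp (a + b) h = psComp a h + psComp b h := by
  ext n
  simp [coeff_psComp, add_mul, Finset.sum_add_distrib]

lemma psComp_one (h : PowerSeries K) : psComp 1 h = 1 := by
  ext n
  rw [coeff_psComp, Finset.sum_eq_single 0]
  · simp
  · intro i _ hi
    simp [PowerSeries.coeff_one, hi]
  · simp

lemma psComp_X {h : PowerSeries K} (hh : PowerSeries.constantCoeff h = 0) :
    psComp PowerSeries.X h = h := by
  ext n
  rw [coeff_psComp]
  rcases Nat.eq_zero_or_pos n with rfl | hn
  · rw [Finset.sum_range_one]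
    simp only [pow_zero, PowerSeries.coeff_zero_eq_constantCoeff]
    rw [hh]
    simp
  · rw [Finset.sum_eq_single 1]
    · simp
    · intro i _ hi
      simp [PowerSeries.coeff_X, hi]
    · intro hmem
      simp at hmem
      omega

lemma psComp_mul {h : PowerSeries K} (hh : PowerSeries.constantCoeff h = 0)
    (a b : PowerSeries K) : psComp (a * b) h = psComp a h * psComp b h := by
  ext n
  rw [coeff_psComp_aeval hh _ (Nat.lt_succ_self n), PowerSeries.coeff_mul]
  have key : PowerSeries.coeff n (Polynomial.aeval h (PowerSeries.trunc (n+1) (a * b)))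
      = PowerSeries.coeff n (Polynomial.aeval h
          (PowerSeries.trunc (n+1) a * PowerSeries.trunc (n+1) b)) := by
    rw [coeff_aeval hh, coeff_aeval hh]
    refine Finset.sum_congr rfl fun i hi => ?_
    have hin : i < n + 1 := by simpa using hi
    congr 1
    rw [PowerSeries.coeff_trunc, if_pos hin, Polynomial.coeff_mul, PowerSeries.coeff_mul]
    refine Finset.sum_congr rfl fun p hp => ?_
    have h1 : p.1 < n + 1 := by
      have := Finset.HasAntidiagonal.antidiagonal.fst_le hp; omega
    have h2 : p.2 < n + 1 := by
      have := Finset.HasAntidiagonal.antidiagonal.snd_le hp; omega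
    rw [PowerSeries.coeff_trunc, if_pos h1, PowerSeries.coeff_trunc, if_pos h2]
  rw [key, map_mul, PowerSeries.coeff_mul]
  refine Finset.sum_congr rfl fun p hp => ?_
  have h1 : p.1 < n + 1 := by
    have := Finset.HasAntidiagonal.antidiagonal.fst_le hp; omega
  have h2 : p.2 < n + 1 := by
    have := Finset.HasAntidiagonal.antidiagonal.snd_le hp; omega
  rw [coeff_psComp_aeval hh a h1, coeff_psComp_aeval hh b h2]

lemma psComp_pow {h : PowerSeries K} (hh : PowerSeries.constantCoeff h = 0)
    (a : PowerSeries K) (j : ℕ) : psComp (a ^ j) h = (psComp a h) ^ j := by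
  induction j with
  | zero => simpa using psComp_one h
  | succ j ih => rw [pow_succ, pow_succ, psComp_mul hh, ih]

lemma psComp_map {L : Type*} [CommRing L] (f : K →+* L) (g h : PowerSeries K) :
    PowerSeries.map f (psComp g h) = psComp (PowerSeries.map f g) (PowerSeries.map f h) := by
  ext n
  simp [coeff_psComp, PowerSeries.coeff_map, ← map_pow]

lemma derivative_map {L : Type*} [CommRing L] (f : K →+* L) (g : PowerSeries K) :
    PowerSeries.map f (PowerSeries.derivative K g) =
      PowerSeries.derivative L (PowerSeries.map f g) := by
  ext n
  simp [PowerSeries.coeff_derivative, PowerSeries.coeff_map]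

section FieldMain
variable {F : Type*} [Field F] [CharZero F]

lemma cancel_coeff {q r : PowerSeries F} (hqr : q * r = 1) (t : ℕ) :
    PowerSeries.coeff t (r ^ (t + 2) * PowerSeries.derivative F q) =
      -PowerSeries.coeff (t + 1) (r ^ (t + 1)) := by
  have hdr : q * PowerSeries.derivative F r + r * PowerSeries.derivative F q = 0 := by
    have h0 : PowerSeries.derivative F (q * r) = 0 := by rw [hqr]; simp
    rw [Derivation.leibniz] at h0
    simpa [smul_eq_mul] using h0
  have key : r ^ (t + 2) * PowerSeries.derivative F q = -(r ^ t * PowerSeries.derivative F r) := by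
    have h1 : r * PowerSeries.derivative F q = -(q * PowerSeries.derivative F r) := by
      linear_combination hdr
    calc r ^ (t + 2) * PowerSeries.derivative F q
        = r ^ (t + 1) * (r * PowerSeries.derivative F q) := by ring
      _ = -((q * r) * (r ^ t * PowerSeries.derivative F r)) := by rw [h1]; ring
      _ = -(r ^ t * PowerSeries.derivative F r) := by rw [hqr]; ring
  have hD : PowerSeries.derivative F (r ^ (t + 1))
      = (t + 1) • (r ^ t * PowerSeries.derivative F r) := by
    rw [Derivation.leibniz_pow]
    simp [smul_smul, mul_comm]
  have hc : PowerSeries.coeff (t + 1) (r ^ (t + 1)) * ((t : F) + 1)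
      = ((t : F) + 1) * PowerSeries.coeff t (r ^ t * PowerSeries.derivative F r) := by
    rw [← PowerSeries.coeff_derivative, hD, map_nsmul]
    push_cast [nsmul_eq_mul]
    ring
  have ht1 : ((t : F) + 1) ≠ 0 := Nat.cast_add_one_ne_zero t
  rw [key, map_neg, neg_inj]
  apply mul_left_cancel₀ ht1
  linear_combination -hc

lemma main_coeff {φ w : PowerSeries F} (hw0 : PowerSeries.constantCoeff w = 0)
    (hφ0 : PowerSeries.constantCoeff φ ≠ 0)
    (hfe : w = PowerSeries.X * psComp φ w) (k' m : ℕ) :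
    ((k' + 1 + m : ℕ) : F) * PowerSeries.coeff (k' + 1 + m) (w ^ (k' + 1)) =
      ((k' + 1 : ℕ) : F) * PowerSeries.coeff m (φ ^ (k' + 1 + m)) := by
  set q := psComp φ w with hqdef
  have hq0 : PowerSeries.constantCoeff q = PowerSeries.constantCoeff φ := by
    rw [← PowerSeries.coeff_zero_eq_constantCoeff_apply, ← PowerSeries.coeff_zero_eq_constantCoeff_apply,
      hqdef, coeff_psComp]
    simp
  set r := q⁻¹ with hrdef
  have hqr : q * r = 1 := PowerSeries.mul_inv_cancel q (by rw [hq0]; exact hφ0)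
  have hrq : ∀ s : ℕ, r ^ s * q ^ s = 1 := fun s => by
    rw [← mul_pow, mul_comm r q, hqr, one_pow]
  set dq := PowerSeries.derivative F q with hdqdef
  have hdw : PowerSeries.derivative F w = q + PowerSeries.X * dq := by
    conv_lhs => rw [hfe]
    rw [Derivation.leibniz]
    simp only [PowerSeries.derivative_X, smul_eq_mul, mul_one]
    ring
  set P := φ ^ (k' + 1 + m) with hPdef
  set A := PowerSeries.trunc (m + 1) P with hAdef
  have hAco : ∀ j, j < m + 1 → A.coeff j = PowerSeries.coeff j P := fun j hj => by
    rw [hAdef, PowerSeries.coeff_trunc, if_pos hj]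
  have hdvd : (PowerSeries.X : PowerSeries F) ^ (m + 1) ∣ (P - ↑A) := by
    rw [PowerSeries.X_pow_dvd_iff]
    intro i hi
    rw [map_sub, Polynomial.coeff_coe, hAco i hi, sub_self]
  obtain ⟨B, hB⟩ := hdvd
  have hPd : P = (A : PowerSeries F) + PowerSeries.X ^ (m + 1) * B := sub_eq_iff_eq_add'.mp hB
  set C := psComp B w with hCdef
  have hqn : q ^ (k' + 1 + m) = Polynomial.aeval w A + w ^ (m + 1) * C := by
    have h1 : q ^ (k' + 1 + m) = psComp P w := by
      rw [hPdef, psComp_pow hw0, hqdef]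
    rw [h1, hPd, psComp_add, psComp_mul hw0, psComp_pow hw0, psComp_X hw0,
      psComp_coe hw0, hCdef]
  have hjunk : ∀ s : PowerSeries F, PowerSeries.coeff m (PowerSeries.X ^ (m + 1) * s) = 0 :=
    fun s => by rw [PowerSeries.coeff_X_pow_mul']; simp
  -- Step 1
  have hT : ((k' + 1 + m : ℕ) : F) * PowerSeries.coeff (k' + 1 + m) (w ^ (k' + 1))
      = ((k' + 1 : ℕ) : F) *
          PowerSeries.coeff (k' + m) (w ^ k' * PowerSeries.derivative F w) := by
    have hD : PowerSeries.derivative F (w ^ (k' + 1))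
        = (k' + 1) • (w ^ k' * PowerSeries.derivative F w) := by
      rw [Derivation.leibniz_pow]
      simp [smul_smul]
    have h2 := PowerSeries.coeff_derivative (w ^ (k' + 1)) (k' + m)
    rw [hD, map_nsmul] at h2
    have e1 : k' + m + 1 = k' + 1 + m := by omega
    rw [e1] at h2
    push_cast [nsmul_eq_mul] at h2 ⊢
    linear_combination -h2
  rw [hT]
  congr 1
  -- Step 2
  have hwq : ∀ j : ℕ, w ^ j = PowerSeries.X ^ j * q ^ j := fun j => by
    conv_lhs => rw [hfe]
    rw [mul_pow]
  have hstep : w ^ k' * PowerSeries.derivative F w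
      = PowerSeries.X ^ k' * (q ^ k' * (q + PowerSeries.X * dq)) := by
    rw [hdw, hwq k']
    ring
  have hE : q ^ k' * (q + PowerSeries.X * dq)
      = r ^ m * q ^ (k' + 1 + m) + PowerSeries.X * (r ^ (m + 1) * q ^ (k' + 1 + m) * dq) := by
    have h1 : r ^ m * q ^ (k' + 1 + m) = q ^ (k' + 1) := by
      have : q ^ (k' + 1 + m) = q ^ (k' + 1) * q ^ m := by rw [← pow_add]
      rw [this, show r ^ m * (q ^ (k' + 1) * q ^ m) = (r ^ m * q ^ m) * q ^ (k' + 1) by ring,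
        hrq, one_mul]
    have h2 : r ^ (m + 1) * q ^ (k' + 1 + m) = q ^ k' := by
      have : q ^ (k' + 1 + m) = q ^ k' * q ^ (m + 1) := by rw [← pow_add]; ring_nf
      rw [this, show r ^ (m + 1) * (q ^ k' * q ^ (m + 1)) = (r ^ (m + 1) * q ^ (m + 1)) * q ^ k' by ring,
        hrq, one_mul]
    rw [h1, h2]
    ring
  rw [hstep]
  have e2 : k' + m = m + k' := by omega
  rw [e2, PowerSeries.coeff_X_pow_mul, hE]
  -- kill junk terms
  have hsplit : r ^ m * q ^ (k' + 1 + m) + PowerSeries.X * (r ^ (m + 1) * q ^ (k' + 1 + m) * dq)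
      = (r ^ m * Polynomial.aeval w A
          + PowerSeries.X * (r ^ (m + 1) * Polynomial.aeval w A * dq))
        + (PowerSeries.X ^ (m + 1) * (r ^ m * q ^ (m + 1) * C)
          + PowerSeries.X ^ (m + 1) * (PowerSeries.X * (r ^ (m + 1) * q ^ (m + 1) * C * dq))) := by
    rw [hqn, hwq (m + 1)]
    ring
  rw [hsplit, map_add, map_add, map_add, hjunk, hjunk, add_zero, add_zero]
  -- expand A
  have hAv : Polynomial.aeval w A = ∑ j ∈ Finset.range (m + 1), A.coeff j • w ^ j :=
    Polynomial.aeval_eq_sum_range' (by rw [hAdef]; exact PowerSeries.natDegree_trunc_lt P m) w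
  rw [hAv, Finset.mul_sum]
  have hmove : PowerSeries.X * ((r ^ (m + 1) * ∑ j ∈ Finset.range (m + 1), A.coeff j • w ^ j) * dq)
      = ∑ j ∈ Finset.range (m + 1),
          A.coeff j • (PowerSeries.X * (r ^ (m + 1) * w ^ j * dq)) := by
    rw [Finset.mul_sum, Finset.sum_mul, Finset.mul_sum]
    refine Finset.sum_congr rfl fun j _ => ?_
    rw [smul_eq_C_mul, smul_eq_C_mul]
    ring
  rw [show PowerSeries.X * (r ^ (m + 1) * (∑ j ∈ Finset.range (m + 1), A.coeff j • w ^ j) * dq)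
      = ∑ j ∈ Finset.range (m + 1),
          A.coeff j • (PowerSeries.X * (r ^ (m + 1) * w ^ j * dq)) from hmove]
  rw [map_sum, map_sum, ← Finset.sum_add_distrib]
  rw [Finset.sum_eq_single m]
  · -- j = m term
    have hx1 : r ^ m * (A.coeff m • w ^ m) = A.coeff m • (PowerSeries.X ^ m * (r ^ m * q ^ m)) := by
      rw [hwq m, smul_eq_C_mul, smul_eq_C_mul]; ring
    have hx2 : PowerSeries.X * (r ^ (m + 1) * w ^ m * dq)
        = PowerSeries.X ^ (m + 1) * (r ^ (m + 1) * q ^ m * dq) := by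
      rw [hwq m]; ring
    rw [hx1, hx2, map_smul, map_smul, hjunk, smul_zero, add_zero, hrq, mul_one,
      PowerSeries.coeff_X_pow, if_pos rfl, smul_eq_mul, mul_one, hAco m (Nat.lt_succ_self m)]
  · -- j ≠ m terms vanish
    intro j hj hjm
    have hjlt : j < m := by simp at hj; omega
    obtain ⟨t', ht'⟩ : ∃ t', m = j + (t' + 1) := ⟨m - j - 1, by omega⟩
    have hx1 : r ^ m * (A.coeff j • w ^ j)
        = A.coeff j • (PowerSeries.X ^ j * r ^ (t' + 1)) := by
      rw [hwq j, smul_eq_C_mul, smul_eq_C_mul, ht',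
        show r ^ (j + (t' + 1)) = r ^ j * r ^ (t' + 1) by rw [← pow_add]]
      linear_combination (PowerSeries.C (A.coeff j) * PowerSeries.X ^ j * r ^ (t' + 1)) * hrq j
    have hx2 : PowerSeries.X * (r ^ (m + 1) * w ^ j * dq)
        = PowerSeries.X ^ (j + 1) * (r ^ (t' + 2) * dq) := by
      rw [hwq j, ht',
        show r ^ (j + (t' + 1) + 1) = r ^ j * r ^ (t' + 2) by rw [← pow_add, show j + (t' + 2) = j + (t' + 1) + 1 from by omega]]
      linear_combination (PowerSeries.X ^ (j + 1) * r ^ (t' + 2) * dq) * hrq j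
    have c1 : PowerSeries.coeff (j + (t' + 1)) (PowerSeries.X ^ j * r ^ (t' + 1))
        = PowerSeries.coeff (t' + 1) (r ^ (t' + 1)) := by
      rw [show j + (t' + 1) = t' + 1 + j from by omega, PowerSeries.coeff_X_pow_mul]
    have c2 : PowerSeries.coeff (j + (t' + 1)) (PowerSeries.X ^ (j + 1) * (r ^ (t' + 2) * dq))
        = PowerSeries.coeff t' (r ^ (t' + 2) * dq) := by
      rw [show j + (t' + 1) = t' + (j + 1) from by omega, PowerSeries.coeff_X_pow_mul]
    rw [hx1, hx2, ht', map_smul, map_smul, c1, c2, hdqdef, cancel_coeff hqr t',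
      smul_eq_mul, smul_eq_mul]
    ring
  · intro h; simp at h


theorem lif_field (φ w : PowerSeries F)
    (hφ0 : PowerSeries.constantCoeff φ ≠ 0)
    (hw0 : PowerSeries.constantCoeff w = 0)
    (hfe : w = PowerSeries.X * psComp φ w)
    (g : PowerSeries F) (n : ℕ) (hn : 0 < n) :
    (n : F) * PowerSeries.coeff n (psComp g w) =
      PowerSeries.coeff (n - 1) ((PowerSeries.derivative F g) * φ ^ n) := by
  obtain ⟨n', rfl⟩ : ∃ n', n = n' + 1 := ⟨n - 1, by omega⟩
  have e1 : n' + 1 - 1 = n' := rfl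
  rw [e1, PowerSeries.coeff_mul, Finset.Nat.sum_antidiagonal_eq_sum_range_succ_mk,
    coeff_psComp, Finset.mul_sum, Finset.sum_range_succ']
  have hz : (↑(n' + 1) : F) *
      (PowerSeries.coeff 0 g * PowerSeries.coeff (n' + 1) (w ^ 0)) = 0 := by
    simp [PowerSeries.coeff_one]
  rw [hz, add_zero]
  refine Finset.sum_congr rfl fun i hi => ?_
  have him : i ≤ n' := by simpa [Nat.lt_succ_iff] using hi
  have hm := main_coeff hw0 hφ0 hfe i (n' - i)
  rw [show i + 1 + (n' - i) = n' + 1 from by omega] at hm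
  rw [PowerSeries.coeff_derivative]
  push_cast at hm ⊢
  linear_combination PowerSeries.coeff (i + 1) g * hm

end FieldMain


end Aux

/-- Functional form of the Lagrange Inversion Formula (second equality):
`n·[x^n] g(f̄(x)) = [x^{n-1}] (g'(x)·φ(x)^n)`. -/
theorem lif_functional_phi {K : Type*} [CommRing K] [IsDomain K] [CharZero K]
    (φ f fbar : PowerSeries K)
    (hφ0 : PowerSeries.constantCoeff φ ≠ 0)
    (hf0 : PowerSeries.constantCoeff f = 0)
    (hf1 : PowerSeries.coeff 1 f ≠ 0)
    (hfbar0 : PowerSeries.constantCoeff fbar = 0)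
    (hcomp1 : psComp f fbar = PowerSeries.X)
    (hcomp2 : psComp fbar f = PowerSeries.X)
    (hfe : fbar = PowerSeries.X * psComp φ fbar)
    (g : PowerSeries K) (n : ℕ) (hn : 0 < n) :
    (n : K) * PowerSeries.coeff n (psComp g fbar) =
      PowerSeries.coeff (n - 1) ((PowerSeries.derivative K g) * φ ^ n) := by

  set L := FractionRing K
  have hinj : Function.Injective (algebraMap K L) := IsFractionRing.injective K L
  haveI : CharZero L := charZero_of_injective_algebraMap hinj
  set ι : K →+* L := (algebraMap K L : K →+* L) with hι
  apply hinj
  have hφ0' : PowerSeries.constantCoeff (PowerSeries.map ι φ) ≠ 0 := by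
    rw [← PowerSeries.coeff_zero_eq_constantCoeff_apply, PowerSeries.coeff_map]
    intro h
    exact hφ0 (hinj (by simpa using h))
  have hw0' : PowerSeries.constantCoeff (PowerSeries.map ι fbar) = 0 := by
    rw [← PowerSeries.coeff_zero_eq_constantCoeff_apply, PowerSeries.coeff_map,
      PowerSeries.coeff_zero_eq_constantCoeff_apply, hfbar0, map_zero]
  have hfe' : PowerSeries.map ι fbar =
      PowerSeries.X * psComp (PowerSeries.map ι φ) (PowerSeries.map ι fbar) := by
    conv_lhs => rw [hfe]
    rw [map_mul, PowerSeries.map_X, psComp_map]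
  have key := lif_field (PowerSeries.map ι φ) (PowerSeries.map ι fbar) hφ0' hw0' hfe'
    (PowerSeries.map ι g) n hn
  rw [← psComp_map, PowerSeries.coeff_map, ← derivative_map, ← map_pow, ← map_mul,
    PowerSeries.coeff_map] at key
  simpa [map_mul, map_natCast] using key
end

section
/- Let K be an integral domain of characteristic zero, and let φ and f be formal power series over K such that the constant coefficient of φ is nonzero, the constant coefficient of f is zero, and the x^1-coefficient of f is nonzero. Let f̄ be the compositional inverse of f (i.e., f̄ has zero constant term and f(f̄(x)) = f̄(f(x)) = x), and assume f̄(x) = x·φ(f̄(x)). Then for all integers n ≥ 1 and l ≥ 0 with n ≥ l, n·[x^n] f̄(x)^l = l·[x^{n-l}] φ(x)^n. -/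
namespace LIFAux

open PowerSeries Finset

variable {R : Type*} [CommRing R]

lemma coeff_pow_of_lt {h : R⟦X⟧} (hh : constantCoeff h = 0) {i n : ℕ} (hni : n < i) :
    coeff n (h ^ i) = 0 := by
  have hd : (X : R⟦X⟧) ^ i ∣ h ^ i := pow_dvd_pow_of_dvd (X_dvd_iff.mpr hh) i
  exact X_pow_dvd_iff.mp hd n hni

lemma coeff_psComp_eq (a h : R⟦X⟧) (k : ℕ) :
    coeff k (psComp a h) = coeff k (Polynomial.eval₂ C h (trunc (k+1) a)) := by
  rw [psComp, coeff_mk,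
    Polynomial.eval₂_eq_sum_range' C (natDegree_trunc_lt a k) h, map_sum]
  refine Finset.sum_congr rfl fun i hi => ?_
  rw [coeff_trunc, if_pos (mem_range.mp hi), coeff_C_mul]

lemma coeff_psComp_trunc {h : R⟦X⟧} (hh : constantCoeff h = 0) (a : R⟦X⟧) {k m : ℕ}
    (hk : k < m) :
    coeff k (psComp a h) = coeff k (Polynomial.eval₂ C h (trunc m a)) := by
  rw [coeff_psComp_eq]
  have hdvd : (Polynomial.X : Polynomial R) ^ (k+1) ∣ (trunc m a - trunc (k+1) a) := by
    rw [Polynomial.X_pow_dvd_iff]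
    intro d hd
    rw [Polynomial.coeff_sub, coeff_trunc, coeff_trunc, if_pos (lt_of_lt_of_le hd hk),
      if_pos hd, sub_self]
  obtain ⟨e, he⟩ := hdvd
  have : trunc m a = trunc (k+1) a + Polynomial.X ^ (k+1) * e := by
    rw [← he]; ring
  rw [this, Polynomial.eval₂_add, Polynomial.eval₂_mul, Polynomial.eval₂_X_pow, map_add]
  have : coeff k (h ^ (k+1) * Polynomial.eval₂ C h e) = 0 := by
    refine X_pow_dvd_iff.mp (dvd_mul_of_dvd_left ?_ _) k (lt_add_one k)
    exact pow_dvd_pow_of_dvd (X_dvd_iff.mpr hh) _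
  rw [this, add_zero]

lemma psComp_modX {h : R⟦X⟧} (hh : constantCoeff h = 0) (a : R⟦X⟧) (m : ℕ) :
    (X : R⟦X⟧) ^ m ∣ psComp a h - Polynomial.eval₂ C h (trunc m a) := by
  rw [X_pow_dvd_iff]
  intro d hd
  rw [map_sub, coeff_psComp_trunc hh a hd, sub_self]

lemma psComp_mul {h : R⟦X⟧} (hh : constantCoeff h = 0) (a b : R⟦X⟧) :
    psComp (a * b) h = psComp a h * psComp b h := by
  ext k
  obtain ⟨u, hu⟩ := psComp_modX hh a (k+1)
  obtain ⟨v, hv⟩ := psComp_modX hh b (k+1)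
  have ha : psComp a h = Polynomial.eval₂ C h (trunc (k+1) a) + X ^ (k+1) * u := by
    rw [← hu]; ring
  have hb : psComp b h = Polynomial.eval₂ C h (trunc (k+1) b) + X ^ (k+1) * v := by
    rw [← hv]; ring
  have hXk : ∀ w : R⟦X⟧, coeff k (X ^ (k+1) * w) = 0 := fun w =>
    X_pow_dvd_iff.mp (dvd_mul_right _ _) k (lt_add_one k)
  rw [coeff_psComp_trunc hh _ (lt_add_one k), ha, hb]
  have htr : (Polynomial.X : Polynomial R) ^ (k+1) ∣
      trunc (k+1) (a*b) - trunc (k+1) a * trunc (k+1) b := by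
    rw [Polynomial.X_pow_dvd_iff]
    intro d hd
    rw [Polynomial.coeff_sub, coeff_trunc, if_pos hd, Polynomial.coeff_mul, coeff_mul,
      sub_eq_zero]
    refine Finset.sum_congr rfl fun p hp => ?_
    rw [coeff_trunc, coeff_trunc, if_pos (lt_of_le_of_lt (Finset.HasAntidiagonal.antidiagonal.fst_le hp) hd),
      if_pos (lt_of_le_of_lt (Finset.HasAntidiagonal.antidiagonal.snd_le hp) hd)]
  obtain ⟨w, hw⟩ := htr
  have : trunc (k+1) (a*b) = trunc (k+1) a * trunc (k+1) b + Polynomial.X ^ (k+1) * w := by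
    rw [← hw]; ring
  rw [this, Polynomial.eval₂_add, Polynomial.eval₂_mul, Polynomial.eval₂_mul,
    Polynomial.eval₂_X_pow, map_add]
  have hXk' : coeff k (h ^ (k+1) * Polynomial.eval₂ C h w) = 0 := by
    refine X_pow_dvd_iff.mp (dvd_mul_of_dvd_left ?_ _) k (lt_add_one k)
    exact pow_dvd_pow_of_dvd (X_dvd_iff.mpr hh) _
  rw [hXk', add_zero]
  set A := Polynomial.eval₂ C h (trunc (k+1) a)
  set B := Polynomial.eval₂ C h (trunc (k+1) b)
  have expand : (A + X^(k+1) * u) * (B + X^(k+1) * v)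
      = A * B + X^(k+1) * (A*v + u*B + X^(k+1)*(u*v)) := by ring
  rw [expand, map_add, hXk, add_zero]


lemma psComp_zero (h : R⟦X⟧) : psComp (0 : R⟦X⟧) h = 0 := by
  ext n; simp [psComp, coeff_mk]

lemma psComp_add (a b h : R⟦X⟧) : psComp (a + b) h = psComp a h + psComp b h := by
  ext n
  simp only [psComp, coeff_mk, map_add, add_mul, Finset.sum_add_distrib]

lemma psComp_one (h : R⟦X⟧) : psComp (1 : R⟦X⟧) h = 1 := by
  ext n
  rw [psComp, coeff_mk]
  rw [Finset.sum_eq_single 0]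
  · simp
  · intro i _ hi
    simp [coeff_one, hi]
  · simp

lemma psComp_C (r : R) (h : R⟦X⟧) : psComp (C r) h = C r := by
  ext n
  rw [psComp, coeff_mk]
  rw [Finset.sum_eq_single 0]
  · simp [coeff_C]
  · intro i _ hi
    simp [coeff_C, hi]
  · simp

lemma psComp_X {h : R⟦X⟧} (hh : constantCoeff h = 0) : psComp (X : R⟦X⟧) h = h := by
  ext n
  rw [psComp, coeff_mk]
  cases n with
  | zero =>
    simp [coeff_zero_eq_constantCoeff, hh]
  | succ n =>
    rw [Finset.sum_eq_single 1]
    · simp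
    · intro i _ hi
      simp [coeff_X, hi]
    · intro habs
      exact absurd (Finset.mem_range.mpr (by omega)) habs

/-- `psComp · h` as a ring homomorphism, for `h` with zero constant term. -/
noncomputable def psCompHom {h : R⟦X⟧} (hh : constantCoeff h = 0) : R⟦X⟧ →+* R⟦X⟧ where
  toFun a := psComp a h
  map_one' := psComp_one h
  map_mul' a b := psComp_mul hh a b
  map_zero' := psComp_zero h
  map_add' a b := psComp_add a b h

lemma constantCoeff_psComp (a h : R⟦X⟧) :
    constantCoeff (psComp a h) = constantCoeff a := by
  rw [← coeff_zero_eq_constantCoeff_apply, ← coeff_zero_eq_constantCoeff_apply a, psComp,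
    coeff_mk]
  simp

/-- Decomposition of a power series into a low-degree part and `X^m` times the tail. -/
lemma decomp (P : R⟦X⟧) (m : ℕ) :
    P = (∑ k ∈ Finset.range m, C (coeff k P) * X ^ k)
        + X ^ m * PowerSeries.mk (fun j => coeff (j + m) P) := by
  ext j
  rw [map_add, map_sum]
  by_cases hj : j < m
  · have h2 : coeff j (X ^ m * PowerSeries.mk (fun i => coeff (i + m) P)) = 0 :=
      X_pow_dvd_iff.mp (dvd_mul_right _ _) j hj
    rw [h2, add_zero, Finset.sum_eq_single j]
    · simp
    · intro k _ hk
      simp [coeff_C_mul, coeff_X_pow, Ne.symm hk]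
    · intro habs
      exact absurd (Finset.mem_range.mpr hj) habs
  · push_neg at hj
    have h1 : ∀ k ∈ Finset.range m, coeff j (C (coeff k P) * X ^ k) = 0 := by
      intro k hk
      have : j ≠ k := by have := Finset.mem_range.mp hk; omega
      simp [coeff_C_mul, coeff_X_pow, this]
    rw [Finset.sum_eq_zero h1, zero_add]
    obtain ⟨d, rfl⟩ : ∃ d, j = d + m := ⟨j - m, by omega⟩
    rw [coeff_X_pow_mul, coeff_mk]

lemma psComp_map {S : Type*} [CommRing S] (f : R →+* S) (a h : R⟦X⟧) :
    PowerSeries.map f (psComp a h) = psComp (PowerSeries.map f a) (PowerSeries.map f h) := by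
  ext n
  rw [psComp, psComp, coeff_map, coeff_mk, coeff_mk, map_sum]
  refine Finset.sum_congr rfl fun i _ => ?_
  rw [map_mul, coeff_map, ← map_pow, coeff_map]


lemma psComp_pow {h : R⟦X⟧} (hh : constantCoeff h = 0) (a : R⟦X⟧) (k : ℕ) :
    psComp (a ^ k) h = (psComp a h) ^ k := by
  induction k with
  | zero => simpa using psComp_one h
  | succ k ih => rw [pow_succ, pow_succ, psComp_mul hh, ih]

lemma psComp_sum {ι : Type*} (s : Finset ι) (f : ι → R⟦X⟧) (h : R⟦X⟧) :
    psComp (∑ i ∈ s, f i) h = ∑ i ∈ s, psComp (f i) h := by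
  ext n
  simp only [psComp, coeff_mk, map_sum, Finset.sum_mul]
  rw [Finset.sum_comm]

section FieldPart

variable {F : Type*} [Field F] [CharZero F]

lemma key (φ g : F⟦X⟧) (hg0 : constantCoeff g = 0) (hφ0 : constantCoeff φ ≠ 0)
    (hfe : g = X * psComp φ g) (a b : ℕ) :
    coeff (a+b) (g ^ a * (d⁄dX F g)) = coeff b (φ ^ (a+b+1)) := by
  set Φ := psComp φ g with hΦdef
  have hΦc : constantCoeff Φ = constantCoeff φ := constantCoeff_psComp φ g
  have hΦne : constantCoeff Φ ≠ 0 := by rw [hΦc]; exact hφ0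
  set Ψ := Φ⁻¹ with hΨdef
  have hΦΨ : Φ * Ψ = 1 := PowerSeries.mul_inv_cancel Φ hΦne
  have hgΨ : g * Ψ = X := by
    conv_lhs => rw [hfe]
    rw [mul_assoc, hΦΨ, mul_one]
  have hK2 : g * (d⁄dX F Ψ) + Ψ * (d⁄dX F g) = 1 := by
    have h := congrArg (d⁄dX F) hgΨ
    rwa [Derivation.leibniz, derivative_X, smul_eq_mul, smul_eq_mul] at h
  -- residue 1
  have hres1 : coeff 0 (Ψ * d⁄dX F g) = 1 := by
    have hg1 : coeff 1 g = constantCoeff φ := by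
      conv_lhs => rw [hfe]
      have h := coeff_X_pow_mul Φ 1 0
      simpa [hΦc] using h
    have hΨc : constantCoeff φ * constantCoeff Ψ = 1 := by
      have h := congrArg constantCoeff hΦΨ
      rwa [map_mul, map_one, hΦc] at h
    calc coeff 0 (Ψ * d⁄dX F g)
        = constantCoeff Ψ * constantCoeff (d⁄dX F g) := by
          rw [coeff_zero_eq_constantCoeff_apply, map_mul]
      _ = constantCoeff Ψ * (coeff 1 g * ((0:F)+1)) := by
          rw [← coeff_zero_eq_constantCoeff_apply (d⁄dX F g), coeff_derivative]
          norm_num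
      _ = 1 := by rw [hg1]; ring_nf; linear_combination hΨc
  -- residue 0
  have hresj : ∀ c : ℕ, coeff (c+1) (Ψ ^ (c+2) * d⁄dX F g) = 0 := by
    intro c
    have hΨdg : Ψ * d⁄dX F g = 1 - g * d⁄dX F Ψ := by linear_combination hK2
    have h2 : Ψ ^ (c+1) * g = X * Ψ ^ c := by
      calc Ψ ^ (c+1) * g = Ψ ^ c * (g * Ψ) := by ring
      _ = X * Ψ ^ c := by rw [hgΨ]; ring
    have e1 : Ψ ^ (c+2) * d⁄dX F g = Ψ ^ (c+1) - X * (Ψ ^ c * d⁄dX F Ψ) := by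
      linear_combination (Ψ ^ (c+1)) * hΨdg - (d⁄dX F Ψ) * h2
    have e2 : d⁄dX F (Ψ ^ (c+1)) = (c+1 : ℕ) • (Ψ ^ c * d⁄dX F Ψ) := by
      have h := Derivation.leibniz_pow (d⁄dX F) (a := Ψ) (c+1)
      simpa [smul_eq_mul] using h
    have hc1 : ((c:F)+1) ≠ 0 := Nat.cast_add_one_ne_zero c
    have e3 : coeff c (Ψ ^ c * d⁄dX F Ψ) = coeff (c+1) (Ψ ^ (c+1)) := by
      have h4 := coeff_derivative (Ψ ^ (c+1)) c
      rw [e2, map_nsmul, nsmul_eq_mul] at h4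
      push_cast at h4
      exact mul_left_cancel₀ hc1 (by linear_combination h4)
    have e5 : coeff (c+1) (X * (Ψ ^ c * d⁄dX F Ψ)) = coeff c (Ψ ^ c * d⁄dX F Ψ) := by
      have h := coeff_X_pow_mul (Ψ ^ c * d⁄dX F Ψ) 1 c
      simpa using h
    rw [e1, map_sub, e5, e3, sub_self]
  -- decomposition of φ^(a+b+1)
  set n := a + b + 1 with hn
  set p : ℕ → F := fun k => coeff k (φ ^ n) with hp
  set Q : F⟦X⟧ := PowerSeries.mk (fun j => coeff (j + (b+1)) (φ ^ n)) with hQ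
  have hI : Φ ^ n = (∑ k ∈ Finset.range (b+1), C (p k) * g ^ k) + g ^ (b+1) * psComp Q g := by
    calc Φ ^ n = psComp (φ ^ n) g := (psComp_pow hg0 φ n).symm
    _ = psComp ((∑ k ∈ Finset.range (b+1), C (p k) * X ^ k) + X ^ (b+1) * Q) g := by
        rw [← decomp (φ ^ n) (b+1)]
    _ = (∑ k ∈ Finset.range (b+1), C (p k) * g ^ k) + g ^ (b+1) * psComp Q g := by
        rw [psComp_add, psComp_mul hg0, psComp_pow hg0, psComp_X hg0, psComp_sum]
        congr 1
        refine Finset.sum_congr rfl fun k _ => ?_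
        rw [psComp_mul hg0, psComp_C, psComp_pow hg0, psComp_X hg0]
  -- main computation
  have hga : ∀ k : ℕ, g ^ k = X ^ k * Φ ^ k := by
    intro k
    conv_lhs => rw [hfe]
    rw [mul_pow]
  have hΦa : Φ ^ a = Φ ^ n * Ψ ^ (b+1) := by
    have h1 : Φ ^ (b+1) * Ψ ^ (b+1) = 1 := by rw [← mul_pow, hΦΨ, one_pow]
    calc Φ ^ a = Φ ^ a * (Φ ^ (b+1) * Ψ ^ (b+1)) := by rw [h1, mul_one]
    _ = Φ ^ n * Ψ ^ (b+1) := by rw [hn]; ring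
  have step1 : coeff (a+b) (g ^ a * d⁄dX F g) = coeff b (Φ ^ a * d⁄dX F g) := by
    rw [hga a]
    have h : X ^ a * Φ ^ a * d⁄dX F g = X ^ a * (Φ ^ a * d⁄dX F g) := by ring
    rw [h, add_comm a b, coeff_X_pow_mul]
  have hXb : g ^ (b+1) * Ψ ^ (b+1) = X ^ (b+1) := by rw [← mul_pow, hgΨ]
  have hsplit : Φ ^ a * d⁄dX F g =
      (∑ k ∈ Finset.range (b+1), C (p k) * (g ^ k * Ψ ^ (b+1) * d⁄dX F g))
        + X ^ (b+1) * (psComp Q g * d⁄dX F g) := by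
    rw [hΦa, hI, add_mul, add_mul, Finset.sum_mul, Finset.sum_mul]
    congr 1
    · exact Finset.sum_congr rfl fun k _ => by ring
    · calc g ^ (b+1) * psComp Q g * Ψ ^ (b+1) * d⁄dX F g
          = (g ^ (b+1) * Ψ ^ (b+1)) * (psComp Q g * d⁄dX F g) := by ring
      _ = X ^ (b+1) * (psComp Q g * d⁄dX F g) := by rw [hXb]
  have hterm : ∀ k ∈ Finset.range (b+1),
      coeff b (C (p k) * (g ^ k * Ψ ^ (b+1) * d⁄dX F g)) =
        if k = b then p b else 0 := by
    intro k hk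
    have hkb : k ≤ b := Nat.lt_succ_iff.mp (Finset.mem_range.mp hk)
    have hsub : Ψ ^ (b+1) = Ψ ^ k * Ψ ^ (b+1-k) := by
      rw [← pow_add]
      congr 1
      omega
    have hfactor : g ^ k * Ψ ^ (b+1) * d⁄dX F g = X ^ k * (Ψ ^ (b+1-k) * d⁄dX F g) := by
      rw [hga k, hsub]
      have hk1 : Φ ^ k * Ψ ^ k = 1 := by rw [← mul_pow, hΦΨ, one_pow]
      calc X ^ k * Φ ^ k * (Ψ ^ k * Ψ ^ (b+1-k)) * d⁄dX F g
          = (Φ ^ k * Ψ ^ k) * (X ^ k * (Ψ ^ (b+1-k) * d⁄dX F g)) := by ring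
      _ = X ^ k * (Ψ ^ (b+1-k) * d⁄dX F g) := by rw [hk1, one_mul]
    rw [coeff_C_mul, hfactor, coeff_X_pow_mul', if_pos hkb]
    by_cases hkb' : k = b
    · subst hkb'
      have h1 : k + 1 - k = 1 := by omega
      rw [h1, pow_one, Nat.sub_self, hres1, mul_one, if_pos rfl]
    · rw [if_neg hkb']
      obtain ⟨c, hc⟩ : ∃ c, b - k = c + 1 := ⟨b - k - 1, by omega⟩
      have hc2 : b + 1 - k = c + 2 := by omega
      rw [hc, hc2, hresj c, mul_zero]
  calc coeff (a+b) (g ^ a * d⁄dX F g) = coeff b (Φ ^ a * d⁄dX F g) := step1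
  _ = (∑ k ∈ Finset.range (b+1),
        coeff b (C (p k) * (g ^ k * Ψ ^ (b+1) * d⁄dX F g)))
      + coeff b (X ^ (b+1) * (psComp Q g * d⁄dX F g)) := by
      rw [hsplit, map_add, map_sum]
  _ = p b := by
      have hz : coeff b (X ^ (b+1) * (psComp Q g * d⁄dX F g)) = 0 :=
        X_pow_dvd_iff.mp (dvd_mul_right _ _) b (lt_add_one b)
      rw [hz, add_zero, Finset.sum_congr rfl hterm, Finset.sum_ite_eq' (Finset.range (b+1)) b
        (fun _ => p b)]
      rw [if_pos (Finset.mem_range.mpr (lt_add_one b))]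
  _ = coeff b (φ ^ (a+b+1)) := rfl

end FieldPart

end LIFAux

/-- Schur–Jabotinsky form of the Lagrange Inversion Formula (second equality):
`n·[x^n] f̄(x)^l = l·[x^{n-l}] φ(x)^n` for `n ≥ 1`, `0 ≤ l ≤ n`. -/
theorem lif_schur_jabotinsky_phi {K : Type*} [CommRing K] [IsDomain K] [CharZero K]
    (φ f fbar : PowerSeries K)
    (hφ0 : PowerSeries.constantCoeff φ ≠ 0)
    (hf0 : PowerSeries.constantCoeff f = 0)
    (hf1 : PowerSeries.coeff 1 f ≠ 0)
    (hfbar0 : PowerSeries.constantCoeff fbar = 0)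
    (hcomp1 : psComp f fbar = PowerSeries.X)
    (hcomp2 : psComp fbar f = PowerSeries.X)
    (hfe : fbar = PowerSeries.X * psComp φ fbar)
    (n l : ℕ) (hn : 1 ≤ n) (hnl : l ≤ n) :
    (n : K) * PowerSeries.coeff n (fbar ^ l) =
      (l : K) * PowerSeries.coeff (n - l) (φ ^ n) := by
  classical
  open PowerSeries in
  rcases Nat.eq_zero_or_pos l with hl | hl
  · subst hl
    rw [pow_zero, PowerSeries.coeff_one, if_neg (by omega : n ≠ 0), mul_zero,
      Nat.cast_zero, zero_mul]
  · set F := FractionRing K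
    haveI : CharZero F := charZero_of_injective_algebraMap (IsFractionRing.injective K F)
    set ι := algebraMap K F with hι
    have hinj : Function.Injective ι := IsFractionRing.injective K F
    apply hinj
    set φ' := PowerSeries.map ι φ with hφ'
    set g := PowerSeries.map ι fbar with hg
    have hg0 : PowerSeries.constantCoeff g = 0 := by
      rw [hg, ← PowerSeries.coeff_zero_eq_constantCoeff_apply, PowerSeries.coeff_map,
        PowerSeries.coeff_zero_eq_constantCoeff_apply, hfbar0, map_zero]
    have hφ0' : PowerSeries.constantCoeff φ' ≠ 0 := by
      rw [hφ', ← PowerSeries.coeff_zero_eq_constantCoeff_apply, PowerSeries.coeff_map,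
        PowerSeries.coeff_zero_eq_constantCoeff_apply]
      intro h
      exact hφ0 (hinj (by rw [h, map_zero]))
    have hfe' : g = PowerSeries.X * psComp φ' g := by
      have h := congrArg (PowerSeries.map ι) hfe
      rwa [map_mul, PowerSeries.map_X, LIFAux.psComp_map] at h
    set a := l - 1 with ha
    set b := n - l with hb
    have hab : n = a + b + 1 := by omega
    have hl1 : l = a + 1 := by omega
    have hn1 : n - 1 = a + b := by omega
    have hkey := LIFAux.key φ' g hg0 hφ0' hfe' a b
    have e2 : d⁄dX F (g ^ l) = l • (g ^ a * d⁄dX F g) := by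
      have h := Derivation.leibniz_pow (d⁄dX F) (a := g) l
      rw [hl1] at h
      rw [hl1]
      simpa [smul_eq_mul] using h
    have hcast : ((n - 1 : ℕ) : F) + 1 = (n : F) := by
      exact_mod_cast congrArg (Nat.cast : ℕ → F) (Nat.succ_pred_eq_of_pos hn)
    have e3 : PowerSeries.coeff (n-1) (d⁄dX F (g ^ l)) =
        PowerSeries.coeff n (g ^ l) * (n : F) := by
      rw [PowerSeries.coeff_derivative, Nat.sub_add_cancel hn, hcast]
    have e4 : PowerSeries.coeff (n-1) (d⁄dX F (g ^ l)) =
        (l : F) * PowerSeries.coeff (a+b) (g ^ a * d⁄dX F g) := by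
      rw [e2, map_nsmul, nsmul_eq_mul, hn1]
    calc ι ((n : K) * PowerSeries.coeff n (fbar ^ l))
        = (n : F) * PowerSeries.coeff n (g ^ l) := by
          rw [map_mul, map_natCast, hg, ← map_pow, PowerSeries.coeff_map]
      _ = PowerSeries.coeff (n-1) (d⁄dX F (g ^ l)) := by rw [e3]; ring
      _ = (l : F) * PowerSeries.coeff b (φ' ^ (a+b+1)) := by rw [e4, hkey]
      _ = ι ((l : K) * PowerSeries.coeff (n - l) (φ ^ n)) := by
          rw [map_mul, map_natCast, hφ', ← map_pow, PowerSeries.coeff_map, ← hab, ← hb]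
end

section
/- Let K be an integral domain of characteristic zero, and let g and h be formal power series over K with g(x)·h(x) = 1 (so h is the multiplicative inverse g^{-1} of g). Then for all natural numbers j and s, [x^s]( x^j·g(x)^j·h(x)^s + x^{j+1}·g(x)^j·h(x)^{s+1}·g'(x) ) equals 1 if j = s and equals 0 otherwise. (In the notation of the paper, [x^s]( x^j·g^{j-s}(x) + x^{j+1}·g^{j-1-s}(x)·g'(x) ) = δ_{j,s}, where negative powers of g are interpreted via its multiplicative inverse h.) -/
open PowerSeries

private lemma key_deriv {K : Type*} [CommRing K]
    (g h : PowerSeries K) (hgh : g * h = 1) (j s : ℕ) :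
    PowerSeries.derivative K (PowerSeries.X ^ (j + 1) * g ^ j * h ^ s) =
      PowerSeries.C ((j : K) + 1) * (PowerSeries.X ^ j * g ^ j * h ^ s) +
        PowerSeries.C ((j : K) - (s : K)) *
          (PowerSeries.X ^ (j + 1) * g ^ j * h ^ (s + 1) * PowerSeries.derivative K g) := by
  set D := PowerSeries.derivative K with hD
  have h1 : g * D h + h * D g = 0 := by
    have := congrArg D hgh
    simpa [Derivation.leibniz, smul_eq_mul, add_comm] using this
  have hDh : D h = -(h ^ 2 * D g) := by
    linear_combination h * h1 - D h * hgh
  have hC : ∀ n : ℕ, (PowerSeries.C (n : K)) = ((n : PowerSeries K)) := by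
    intro n; simp
  have hXp : ∀ n : ℕ, D (PowerSeries.X ^ n : PowerSeries K) =
      (n : PowerSeries K) * PowerSeries.X ^ (n - 1) := by
    intro n
    cases n with
    | zero => simp
    | succ n =>
      rw [Derivation.leibniz_pow]
      simp [nsmul_eq_mul, smul_eq_mul, hD]
  have hgp : D (g ^ j) = (j : PowerSeries K) * g ^ (j-1) * D g := by
    rw [Derivation.leibniz_pow]; simp [nsmul_eq_mul, smul_eq_mul]; ring
  have hhp : D (h ^ s) = (s : PowerSeries K) * h ^ (s-1) * D h := by
    rw [Derivation.leibniz_pow]; simp [nsmul_eq_mul, smul_eq_mul]; ring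
  rw [Derivation.leibniz, Derivation.leibniz, smul_eq_mul, smul_eq_mul, smul_eq_mul,
    smul_eq_mul, hXp, hgp, hhp, hDh]
  simp only [map_add, map_sub, map_one, map_natCast]
  push_cast
  cases j with
  | zero =>
    cases s with
    | zero => simp
    | succ s =>
      simp only [Nat.add_sub_cancel, pow_zero, Nat.cast_zero]
      push_cast
      ring
  | succ j =>
    cases s with
    | zero =>
      simp only [Nat.add_sub_cancel, Nat.cast_zero, pow_zero]
      push_cast
      linear_combination (-(j:PowerSeries K) - 1) * PowerSeries.X ^ (j+1+1) * g ^ j * D g * hgh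
    | succ s =>
      simp only [Nat.add_sub_cancel]
      push_cast
      linear_combination
        (-(j:PowerSeries K) - 1) * PowerSeries.X ^ (j+1+1) * g ^ j * h ^ (s+1) * D g * hgh

/-- Lemma 1 of the paper:
`[x^s]( x^j·g^{j-s}(x) + x^{j+1}·g^{j-1-s}(x)·g'(x) ) = δ_{j,s}`,
where negative powers of `g` are interpreted via its multiplicative inverse `h`. -/
theorem lemma1_kronecker {K : Type*} [CommRing K] [IsDomain K] [CharZero K]
    (g h : PowerSeries K) (hgh : g * h = 1) (j s : ℕ) :
    PowerSeries.coeff s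
        (PowerSeries.X ^ j * g ^ j * h ^ s +
          PowerSeries.X ^ (j + 1) * g ^ j * h ^ (s + 1) * (PowerSeries.derivative K g)) =
      if j = s then 1 else 0 := by
  set a := PowerSeries.coeff s (PowerSeries.X ^ j * g ^ j * h ^ s) with ha
  set b := PowerSeries.coeff s
      (PowerSeries.X ^ (j + 1) * g ^ j * h ^ (s + 1) * PowerSeries.derivative K g) with hb
  rw [map_add, ← ha, ← hb]
  have hkey := congrArg (PowerSeries.coeff s) (key_deriv g h hgh j s)
  rw [PowerSeries.coeff_derivative, map_add, PowerSeries.coeff_C_mul,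
    PowerSeries.coeff_C_mul, ← ha, ← hb] at hkey
  have hshift : PowerSeries.coeff (s + 1) (PowerSeries.X ^ (j + 1) * g ^ j * h ^ s) = a := by
    have : PowerSeries.X ^ (j + 1) * g ^ j * h ^ s
        = PowerSeries.X * (PowerSeries.X ^ j * g ^ j * h ^ s) := by ring
    rw [this, PowerSeries.coeff_succ_X_mul, ha]
  rw [hshift] at hkey
  have hmain : ((j : K) - s) * (a + b) = 0 := by linear_combination -hkey
  by_cases hjs : j = s
  · subst hjs
    simp only [if_pos rfl]
    have hA : a = 1 := by
      rw [ha]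
      have : PowerSeries.X ^ j * g ^ j * h ^ j = PowerSeries.X ^ j * (g * h) ^ j := by
        rw [mul_pow]; ring
      rw [this, hgh, one_pow, mul_one, PowerSeries.coeff_X_pow, if_pos rfl]
    have hB : b = 0 := by
      rw [hb]
      have : PowerSeries.X ^ (j + 1) * g ^ j * h ^ (j + 1) * PowerSeries.derivative K g
          = PowerSeries.X ^ (j + 1) * (g ^ j * h ^ (j + 1) * PowerSeries.derivative K g) := by
        ring
      rw [this, PowerSeries.coeff_X_pow_mul', if_neg (by omega)]
    rw [hA, hB, add_zero]; simp
  · rw [if_neg hjs]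
    have hne : ((j : K) - s) ≠ 0 := by
      rw [sub_ne_zero]
      exact_mod_cast fun hc => hjs (Nat.cast_injective hc)
    rcases mul_eq_zero.mp hmain with hc | hc
    · exact absurd hc hne
    · exact hc
end

section
/- Let K be an integral domain of characteristic zero, and let g and h be formal power series over K with g(x)·h(x) = 1 (so h is the multiplicative inverse g^{-1} of g). Then for all natural numbers j and s with j < s, [x^{s-j}]( g(x)^j·h(x)^s ) + [x^{s-j-1}]( g(x)^j·h(x)^{s+1}·g'(x) ) = 0. (In the notation of the paper: [x^{s-j}] g^{j-s}(x) + [x^{s-j-1}]( g^{j-s-1}(x)·g'(x) ) = 0, where negative powers of g are interpreted via its multiplicative inverse h.) -/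
/-- The nontrivial case `j < s` in the proof of Lemma 1 of the paper:
`[x^{s-j}] g^{j-s}(x) + [x^{s-j-1}]( g^{j-s-1}(x)·g'(x) ) = 0`,
where negative powers of `g` are interpreted via its multiplicative inverse `h`. -/
theorem lemma1_nontrivial_case {K : Type*} [CommRing K] [IsDomain K] [CharZero K]
    (g h : PowerSeries K) (hgh : g * h = 1) (j s : ℕ) (hjs : j < s) :
    PowerSeries.coeff (s - j) (g ^ j * h ^ s) +
      PowerSeries.coeff (s - j - 1) (g ^ j * h ^ (s + 1) * (PowerSeries.derivative K g)) = 0 := by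
  set D := PowerSeries.derivative K with hD
  set A : PowerSeries K := g ^ j * h ^ (s + 1) * D g with hA
  have hg0 : g ≠ 0 := by
    rintro rfl
    simp at hgh
  -- derivative of gh = 1
  have hgh' : g * D h = -(h * D g) := by
    have h1 := D.leibniz g h
    rw [hgh, D.map_one_eq_zero] at h1
    have h2 : g * D h + h * D g = 0 := by simpa [smul_eq_mul] using h1.symm
    linear_combination h2
  have hgA : g * A = g ^ j * h ^ s * D g := by
    rw [hA, pow_succ]
    linear_combination (g ^ j * h ^ s * D g) * hgh
  -- key identity times g
  have key : g * D (g ^ j * h ^ s) = g * ((j : PowerSeries K) * A - (s : PowerSeries K) * A) := by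
    rw [D.leibniz, D.leibniz_pow, D.leibniz_pow]
    simp only [smul_eq_mul, nsmul_eq_mul]
    have hterm1 : g * (g ^ j * ((s : PowerSeries K) * (h ^ (s - 1) * D h)))
        = -((s : PowerSeries K) * (g * A)) := by
      rw [hgA]
      have hs1 : h ^ (s - 1) * h = h ^ s := by
        rw [← pow_succ, Nat.sub_add_cancel (by omega : 1 ≤ s)]
      calc g * (g ^ j * ((s : PowerSeries K) * (h ^ (s - 1) * D h)))
          = (s : PowerSeries K) * (g ^ j * h ^ (s-1) * (g * D h)) := by ring
        _ = (s : PowerSeries K) * (g ^ j * h ^ (s-1) * (-(h * D g))) := by rw [hgh']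
        _ = -((s : PowerSeries K) * (g ^ j * (h ^ (s-1) * h) * D g)) := by ring
        _ = -((s : PowerSeries K) * (g ^ j * h ^ s * D g)) := by rw [hs1]
    have hterm2 : g * (h ^ s * ((j : PowerSeries K) * (g ^ (j - 1) * D g)))
        = (j : PowerSeries K) * (g * A) := by
      rw [hgA]
      cases j with
      | zero => simp
      | succ n =>
        simp only [Nat.add_sub_cancel]
        push_cast
        have hg1 : g * g ^ n = g ^ (n + 1) := (pow_succ g n).symm ▸ (mul_comm g (g ^ n)) ▸ rfl
        calc g * (h ^ s * (((n : PowerSeries K) + 1) * (g ^ n * D g)))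
            = ((n : PowerSeries K) + 1) * (h ^ s * ((g * g ^ n) * D g)) := by ring
          _ = ((n : PowerSeries K) + 1) * (h ^ s * (g ^ (n+1) * D g)) := by
              rw [← pow_succ']
          _ = ((n : PowerSeries K) + 1) * (g ^ (n+1) * h ^ s * D g) := by ring
    rw [mul_add, hterm1, hterm2]
    ring
  have key2 : D (g ^ j * h ^ s) = (j : PowerSeries K) * A - (s : PowerSeries K) * A :=
    mul_left_cancel₀ hg0 key
  have hd : 1 ≤ s - j := by omega
  have hc := congrArg (PowerSeries.coeff (s - j - 1)) key2
  rw [PowerSeries.coeff_derivative, Nat.sub_add_cancel hd] at hc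
  simp only [map_sub, ← map_natCast (PowerSeries.C (R := K)), PowerSeries.coeff_C_mul] at hc
  have hcast : ((s - j - 1 : ℕ) : K) + 1 = ((s - j : ℕ) : K) := by
    exact_mod_cast congrArg (Nat.cast : ℕ → K) (Nat.sub_add_cancel hd)
  rw [hcast] at hc
  have hjs' : (j : K) - (s : K) = -((s - j : ℕ) : K) := by
    push_cast [Nat.cast_sub hjs.le]; ring
  have hne : ((s - j : ℕ) : K) ≠ 0 := by
    simp only [ne_eq, Nat.cast_eq_zero]; omega
  have hfin : ((s - j : ℕ) : K) * (PowerSeries.coeff (s - j) (g ^ j * h ^ s)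
      + PowerSeries.coeff (s - j - 1) A) = 0 := by
    have := hjs'
    linear_combination hc + (PowerSeries.coeff (s - j - 1) A) * hjs'
  exact (mul_eq_zero.mp hfin).resolve_left hne
end

section
/- Let R be a commutative ring and let φ be a formal power series over R. Then for all integers n ≥ 1 and l ≥ 0, (n+1)·[x^{n-1}]( (x^l·φ(x))'·φ(x)^n ) = n·(l+1)·[x^{n-l}] φ(x)^{n+1}, where [x^{n-l}] is interpreted as 0 when l > n. -/
/-- Computational core of the inductive step of the first proof of LIF:
`(n+1)·[x^{n-1}]( (x^l·φ(x))'·φ(x)^n ) = n·(l+1)·[x^{n-l}] φ(x)^{n+1}`,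
where `[x^{n-l}]` is interpreted as `0` when `l > n`. -/
theorem inductive_step_core {R : Type*} [CommRing R]
    (φ : PowerSeries R) (n l : ℕ) (hn : 1 ≤ n) :
    ((n : R) + 1) * PowerSeries.coeff (R := R) (n - 1)
        ((PowerSeries.derivative R (PowerSeries.X ^ l * φ)) * φ ^ n) =
      (n : R) * ((l : R) + 1) *
        (if l ≤ n then PowerSeries.coeff (R := R) (n - l) (φ ^ (n + 1)) else 0) := by
  set D := PowerSeries.derivative R with hD
  have key : ((n : R) + 1) • (D (PowerSeries.X ^ l * φ) * φ ^ n) =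
      D (PowerSeries.X ^ l * φ ^ (n + 1)) +
        PowerSeries.C (R := R) ((n : R) * (l : R)) *
          (PowerSeries.X ^ (l - 1) * φ ^ (n + 1)) := by
    have h1 : D (PowerSeries.X ^ l) =
        PowerSeries.C (R := R) (l : R) * PowerSeries.X ^ (l - 1) := by
      rw [hD, Derivation.leibniz_pow]
      simp [smul_smul, nsmul_eq_mul, PowerSeries.smul_eq_C_mul]
    have h2 : D (φ ^ (n + 1)) =
        PowerSeries.C (R := R) ((n : R) + 1) * (φ ^ n * D φ) := by
      rw [hD, Derivation.leibniz_pow]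
      simp only [Nat.add_sub_cancel, nsmul_eq_mul, smul_smul, smul_eq_mul,
        PowerSeries.smul_eq_C_mul, Nat.cast_add, Nat.cast_one, map_add, map_one, map_natCast]
    rw [Derivation.leibniz, Derivation.leibniz, smul_eq_mul, smul_eq_mul, smul_eq_mul,
      smul_eq_mul, h1, h2, PowerSeries.smul_eq_C_mul]
    simp only [map_mul, map_add, map_natCast, map_one]
    ring
  have hn1 : n - 1 + 1 = n := Nat.succ_pred_eq_of_pos hn
  have hcast : ((n - 1 : ℕ) : R) + 1 = (n : R) := by
    rw [← Nat.cast_one (R := R), ← Nat.cast_add, hn1]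
  have e1 : ((n : R) + 1) * PowerSeries.coeff (R := R) (n - 1) (D (PowerSeries.X ^ l * φ) * φ ^ n) =
      PowerSeries.coeff (R := R) (n - 1) (D (PowerSeries.X ^ l * φ ^ (n + 1))) +
        (n : R) * (l : R) *
          PowerSeries.coeff (R := R) (n - 1) (PowerSeries.X ^ (l - 1) * φ ^ (n + 1)) := by
    have h := congrArg (PowerSeries.coeff (R := R) (n - 1)) key
    simpa only [map_add, map_smul, smul_eq_mul, PowerSeries.coeff_C_mul] using h
  have e2 : PowerSeries.coeff (R := R) (n - 1) (D (PowerSeries.X ^ l * φ ^ (n + 1))) =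
      (if l ≤ n then PowerSeries.coeff (R := R) (n - l) (φ ^ (n + 1)) else 0) * (n : R) := by
    rw [hD, PowerSeries.coeff_derivative, hn1, PowerSeries.coeff_X_pow_mul', hcast]
  have e3 : PowerSeries.coeff (R := R) (n - 1) (PowerSeries.X ^ (l - 1) * φ ^ (n + 1)) =
      if l - 1 ≤ n - 1 then PowerSeries.coeff (R := R) (n - 1 - (l - 1)) (φ ^ (n + 1)) else 0 :=
    PowerSeries.coeff_X_pow_mul' _ _ _
  rw [e1, e2, e3]
  rcases Nat.eq_zero_or_pos l with hl0 | hl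
  · subst hl0
    simp [hn]
    ring
  · have hl1 : l - 1 ≤ n - 1 ↔ l ≤ n := by omega
    by_cases hln : l ≤ n
    · rw [if_pos hln, if_pos (hl1.mpr hln)]
      have : n - 1 - (l - 1) = n - l := by omega
      rw [this]
      ring
    · rw [if_neg hln, if_neg (fun h => hln (hl1.mp h))]
      ring
end
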